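/- Let δ = 0.001 and let G be an (n,d,λ)-graph with λ ≤ δd. Let S ⊆ V(G) be such that every vertex v ∈ V(G) has at least d₁ neighbors in S, where d₁ ≥ 2δd. Then every subset X ⊆ V(G) with |X| ≤ δn satisfies |Γ(X,S)| ≥ (d₁/(2δd))·|X|. -/

import Mathlib

set_option maxHeartbeats 1000000


open scoped Classical

/-- An `(n,d,λ)`-graph: a `d`-regular graph on `n` vertices such that all eigenvalues of its
adjacency matrix except the largest one (which equals `d`) are at most `lam` in absolute value. -/
def IsNDLGraph (n : ℕ) (G : SimpleGraph (Fin n)) (d : ℕ) (lam : ℝ) : Prop :=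
  G.IsRegularOfDegree d ∧
  ∃ (h : (G.adjMatrix ℝ).IsHermitian) (i₀ : Fin n),
    h.eigenvalues i₀ = (d : ℝ) ∧ ∀ i, i ≠ i₀ → |h.eigenvalues i| ≤ lam

/-- `Γ(X,W)`: the set of all vertices of `W` (possibly belonging to `X`) having a neighbor
in `X`. -/
noncomputable def GammaIn (n : ℕ) (G : SimpleGraph (Fin n)) (X W : Finset (Fin n)) :
    Finset (Fin n) :=
  W.filter (fun v => ∃ x ∈ X, G.Adj x v)

open Matrix Finset in
open scoped RealInnerProductSpace in
lemma mixing_aux {n d : ℕ} {lam : ℝ} (G : SimpleGraph (Fin n))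
    (hreg : G.IsRegularOfDegree d)
    (h : (G.adjMatrix ℝ).IsHermitian) (i₀ : Fin n)
    (h0 : h.eigenvalues i₀ = (d : ℝ))
    (hbd : ∀ i, i ≠ i₀ → |h.eigenvalues i| ≤ lam)
    (hlamd : lam < d) (hlam0 : 0 ≤ lam) (hn : 0 < n)
    (X Y : Finset (Fin n)) :
    ∑ u ∈ X, ∑ v ∈ Y, (G.adjMatrix ℝ) u v
      ≤ d * X.card * Y.card / n + lam * Real.sqrt (X.card * Y.card) := by
  set A : Matrix (Fin n) (Fin n) ℝ := G.adjMatrix ℝ with hA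
  set B := h.eigenvectorBasis with hB
  set μ := h.eigenvalues with hμ
  set x : Fin n → ℝ := fun i => if i ∈ X then 1 else 0 with hx
  set y : Fin n → ℝ := fun i => if i ∈ Y then 1 else 0 with hy
  set o : Fin n → ℝ := fun _ => 1 with ho
  have toE : (Fin n → ℝ) → EuclideanSpace ℝ (Fin n) := (WithLp.equiv 2 _).symm
  -- inner product formula
  have ipf : ∀ (u w : EuclideanSpace ℝ (Fin n)), ⟪u, w⟫ = ∑ j, u j * w j := by
    intro u w; simp [PiLp.inner_apply, RCLike.inner_apply]
    exact Finset.sum_congr rfl (fun _ _ => mul_comm _ _)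
  -- symmetry
  have hsymm : Aᵀ = A := G.isSymm_adjMatrix
  -- eigen-action on inner products : ⟪B i, toE (A *ᵥ w)⟫ = μ i * ⟪B i, toE w⟫
  have key : ∀ (i : Fin n) (w : Fin n → ℝ),
      ⟪B i, ((WithLp.equiv 2 _).symm (A *ᵥ w) : EuclideanSpace ℝ (Fin n))⟫
        = μ i * ⟪B i, ((WithLp.equiv 2 _).symm w : EuclideanSpace ℝ (Fin n))⟫ := by
    intro i w
    have h1 : ((B i : EuclideanSpace ℝ (Fin n)) : Fin n → ℝ) ⬝ᵥ (A *ᵥ w)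
        = (A *ᵥ ((B i : EuclideanSpace ℝ (Fin n)) : Fin n → ℝ)) ⬝ᵥ w := by
      rw [Matrix.dotProduct_mulVec, ← Matrix.mulVec_transpose, hsymm]
    have h2 : A *ᵥ ((B i : EuclideanSpace ℝ (Fin n)) : Fin n → ℝ)
        = μ i • ((B i : EuclideanSpace ℝ (Fin n)) : Fin n → ℝ) :=
      h.mulVec_eigenvectorBasis i
    rw [ipf, ipf]
    calc (∑ j, (B i) j * (A *ᵥ w) j) = ((B i : EuclideanSpace ℝ (Fin n)) : Fin n → ℝ) ⬝ᵥ (A *ᵥ w) := rfl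
      _ = (A *ᵥ ((B i : EuclideanSpace ℝ (Fin n)) : Fin n → ℝ)) ⬝ᵥ w := h1
      _ = (μ i • ((B i : EuclideanSpace ℝ (Fin n)) : Fin n → ℝ)) ⬝ᵥ w := by rw [h2]
      _ = μ i * ∑ j, (B i) j * w j := by
          simp [dotProduct, Finset.mul_sum, mul_assoc]
  -- coefficients
  set c : Fin n → ℝ := fun i => ⟪B i, ((WithLp.equiv 2 _).symm x : EuclideanSpace ℝ (Fin n))⟫ with hc
  set e : Fin n → ℝ := fun i => ⟪B i, ((WithLp.equiv 2 _).symm y : EuclideanSpace ℝ (Fin n))⟫ with he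
  set a : Fin n → ℝ := fun i => ⟪B i, ((WithLp.equiv 2 _).symm o : EuclideanSpace ℝ (Fin n))⟫ with ha
  -- Parseval
  have pars : ∀ (v w : Fin n → ℝ),
      (∑ j, v j * w j) = ∑ i, (⟪B i, ((WithLp.equiv 2 _).symm v : EuclideanSpace ℝ (Fin n))⟫)
        * (⟪B i, ((WithLp.equiv 2 _).symm w : EuclideanSpace ℝ (Fin n))⟫) := by
    intro v w
    have := B.sum_inner_mul_inner ((WithLp.equiv 2 _).symm v : EuclideanSpace ℝ (Fin n))
      ((WithLp.equiv 2 _).symm w : EuclideanSpace ℝ (Fin n))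
    rw [ipf] at this
    simp only [WithLp.equiv_symm_apply, PiLp.toLp_apply] at this
    rw [← this]
    congr 1; funext i; rw [real_inner_comm]; rfl
  -- A *ᵥ o = d • o
  have hAo : A *ᵥ o = (d : ℝ) • o := by
    funext v
    show (A *ᵥ o) v = (d : ℝ) * 1
    simp only [hA, ho, Matrix.mulVec, dotProduct, SimpleGraph.adjMatrix_apply, mul_one,
      Finset.sum_boole]
    rw [← SimpleGraph.neighborFinset_eq_filter]
    exact_mod_cast hreg v
  -- a i = 0 for i ≠ i₀
  have ha0 : ∀ i, i ≠ i₀ → a i = 0 := by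
    intro i hi
    have h1 := key i o
    rw [hAo] at h1
    have h2 : ⟪B i, ((WithLp.equiv 2 _).symm ((d:ℝ) • o) : EuclideanSpace ℝ (Fin n))⟫
        = (d : ℝ) * a i := by
      rw [ipf]
      simp only [WithLp.equiv_symm_apply, PiLp.toLp_apply, Pi.smul_apply, smul_eq_mul]
      rw [ha]
      simp only [ipf, WithLp.equiv_symm_apply, PiLp.toLp_apply, Finset.mul_sum]
      exact Finset.sum_congr rfl (fun j _ => by ring)
    rw [h2] at h1
    have hmu : μ i ≠ (d : ℝ) := by
      intro hcon
      have := hbd i hi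
      rw [hcon] at this
      have : (d : ℝ) ≤ lam := le_trans (le_abs_self _) this
      linarith
    have : (μ i - d) * a i = 0 := by linarith [h1]
    rcases mul_eq_zero.1 this with h4 | h4
    · exact absurd (by linarith : μ i = (d:ℝ)) hmu
    · exact h4
  -- basic Parseval values
  have hxo : ∑ i, c i * a i = (X.card : ℝ) := by
    rw [hc, ha, ← pars x o]
    simp [hx, ho, Finset.sum_ite_mem, Finset.univ_inter]
  have hyo : ∑ i, e i * a i = (Y.card : ℝ) := by
    rw [he, ha, ← pars y o]
    simp [hy, ho, Finset.sum_ite_mem, Finset.univ_inter]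
  have hoo : ∑ i, a i * a i = (n : ℝ) := by
    rw [ha, ← pars o o]; simp [ho]
  have hxx : ∑ i, c i * c i = (X.card : ℝ) := by
    rw [hc, ← pars x x]
    have hxj : ∀ j, x j * x j = x j := by intro j; by_cases hj : j ∈ X <;> simp [hx, hj]
    simp only [hxj]
    simp [hx, Finset.sum_ite_mem, Finset.univ_inter]
  have hyy : ∑ i, e i * e i = (Y.card : ℝ) := by
    rw [he, ← pars y y]
    have hyj : ∀ j, y j * y j = y j := by intro j; by_cases hj : j ∈ Y <;> simp [hy, hj]
    simp only [hyj]
    simp [hy, Finset.sum_ite_mem, Finset.univ_inter]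
  -- collapse sums to i₀
  have hxo' : c i₀ * a i₀ = (X.card : ℝ) := by
    rw [← hxo]
    rw [Finset.sum_eq_single i₀]
    · intro b _ hb; rw [ha0 b hb]; ring
    · intro hb; exact absurd (Finset.mem_univ i₀) hb
  have hyo' : e i₀ * a i₀ = (Y.card : ℝ) := by
    rw [← hyo]
    rw [Finset.sum_eq_single i₀]
    · intro b _ hb; rw [ha0 b hb]; ring
    · intro hb; exact absurd (Finset.mem_univ i₀) hb
  have hoo' : a i₀ * a i₀ = (n : ℝ) := by
    rw [← hoo]
    rw [Finset.sum_eq_single i₀]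
    · intro b _ hb; rw [ha0 b hb]; ring
    · intro hb; exact absurd (Finset.mem_univ i₀) hb
  -- main identity: double sum = ∑ μ i * c i * e i
  have main : ∑ u ∈ X, ∑ v ∈ Y, A u v = ∑ i, μ i * c i * e i := by
    have lhs : ∑ j, x j * (A *ᵥ y) j = ∑ u ∈ X, ∑ v ∈ Y, A u v := by
      have e1 : ∀ j, x j * (A *ᵥ y) j = if j ∈ X then ∑ v ∈ Y, A j v else 0 := by
        intro j
        by_cases hj : j ∈ X <;>
          simp [hx, hj, Matrix.mulVec, dotProduct, hy, mul_ite,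
            Finset.sum_ite_mem, Finset.univ_inter]
      simp only [e1, Finset.sum_ite_mem, Finset.univ_inter]
    rw [← lhs, pars x (A *ᵥ y)]
    refine Finset.sum_congr rfl (fun i _ => ?_)
    rw [key i y]
    show c i * (μ i * e i) = μ i * c i * e i
    ring
  -- bound the tail
  have tail : ∑ i ∈ Finset.univ.erase i₀, μ i * c i * e i
      ≤ lam * Real.sqrt (X.card * Y.card) := by
    have step1 : ∑ i ∈ Finset.univ.erase i₀, μ i * c i * e i
        ≤ ∑ i ∈ Finset.univ.erase i₀, lam * (|c i| * |e i|) := by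
      apply Finset.sum_le_sum
      intro i hi
      have hb := hbd i (Finset.ne_of_mem_erase hi)
      calc μ i * c i * e i ≤ |μ i * c i * e i| := le_abs_self _
        _ = |μ i| * (|c i| * |e i|) := by rw [abs_mul, abs_mul, mul_assoc]
        _ ≤ lam * (|c i| * |e i|) := by
            apply mul_le_mul_of_nonneg_right hb
            positivity
    have step2 : ∑ i ∈ Finset.univ.erase i₀, (|c i| * |e i|)
        ≤ ∑ i, (|c i| * |e i|) := by
      apply Finset.sum_le_sum_of_subset_of_nonneg (Finset.erase_subset _ _)
      intro i _ _; positivity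
    have cs : (∑ i, |c i| * |e i|) ^ 2 ≤ (X.card : ℝ) * (Y.card : ℝ) := by
      calc (∑ i, |c i| * |e i|) ^ 2 ≤ (∑ i, |c i| ^ 2) * (∑ i, |e i| ^ 2) :=
            Finset.sum_mul_sq_le_sq_mul_sq _ _ _
        _ = (X.card : ℝ) * (Y.card : ℝ) := by
            rw [← hxx, ← hyy]; congr 1 <;> (congr 1; funext i; rw [sq_abs]; ring)
    have sum_le : ∑ i, |c i| * |e i| ≤ Real.sqrt ((X.card : ℝ) * (Y.card : ℝ)) := by
      have h0' : (0:ℝ) ≤ ∑ i, |c i| * |e i| :=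
        Finset.sum_nonneg fun i _ => mul_nonneg (abs_nonneg _) (abs_nonneg _)
      rw [← Real.sqrt_sq h0']
      exact Real.sqrt_le_sqrt cs
    calc ∑ i ∈ Finset.univ.erase i₀, μ i * c i * e i
        ≤ ∑ i ∈ Finset.univ.erase i₀, lam * (|c i| * |e i|) := step1
      _ = lam * ∑ i ∈ Finset.univ.erase i₀, (|c i| * |e i|) := by rw [Finset.mul_sum]
      _ ≤ lam * ∑ i, (|c i| * |e i|) := mul_le_mul_of_nonneg_left step2 hlam0
      _ ≤ lam * Real.sqrt (X.card * Y.card) := mul_le_mul_of_nonneg_left sum_le hlam0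
  -- head term
  have head : μ i₀ * c i₀ * e i₀ = d * X.card * Y.card / n := by
    have hce : c i₀ * e i₀ * (n:ℝ) = (X.card : ℝ) * (Y.card : ℝ) := by
      rw [← hoo', ← hxo', ← hyo']; ring
    have hn' : (n : ℝ) ≠ 0 := Nat.cast_ne_zero.2 hn.ne'
    rw [h0]
    field_simp
    nlinarith [hce]
  -- combine
  rw [main]
  rw [← Finset.sum_erase_add Finset.univ _ (Finset.mem_univ i₀)]
  rw [head]
  linarith [tail]

/-- Let `δ = 0.001` and let `G` be an `(n,d,λ)`-graph with `λ ≤ δd`. Let `S ⊆ V(G)` be such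
that every vertex has at least `d₁` neighbors in `S`, where `d₁ ≥ 2δd`. Then every `X ⊆ V(G)`
with `|X| ≤ δn` satisfies `|Γ(X,S)| ≥ (d₁/(2δd))·|X|`. -/
theorem expansion_into_matchmaker (n d : ℕ) (lam d₁ : ℝ) (G : SimpleGraph (Fin n))
    (hG : IsNDLGraph n G d lam) (hlam : lam ≤ 0.001 * (d : ℝ))
    (S : Finset (Fin n))
    (hS : ∀ v : Fin n, d₁ ≤ ((S ∩ G.neighborFinset v).card : ℝ))
    (hd₁ : d₁ ≥ 2 * 0.001 * (d : ℝ)) :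
    ∀ X : Finset (Fin n), (X.card : ℝ) ≤ 0.001 * (n : ℝ) →
      ((GammaIn n G X S).card : ℝ) ≥ (d₁ / (2 * 0.001 * (d : ℝ))) * (X.card : ℝ) := by

  intro X hX
  obtain ⟨hreg, h, i₀, h0, hbd⟩ := hG
  by_cases hd0 : d = 0
  · subst hd0
    simp only [Nat.cast_zero, mul_zero, div_zero, zero_mul, ge_iff_le]
    positivity
  by_cases hX0 : X = ∅
  · subst hX0
    simp only [Finset.card_empty, Nat.cast_zero, mul_zero, ge_iff_le]
    positivity
  -- nonempty case
  have hd1 : 1 ≤ (d : ℝ) := by exact_mod_cast Nat.one_le_iff_ne_zero.2 hd0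
  have hXc : 1 ≤ (X.card : ℝ) := by
    exact_mod_cast Nat.one_le_iff_ne_zero.2 (fun hc => hX0 (Finset.card_eq_zero.1 hc))
  have hn1000 : (1000 : ℝ) ≤ (n : ℝ) := by nlinarith
  have hn : 0 < n := by exact_mod_cast (by linarith : (0:ℝ) < n)
  have hn2 : 2 ≤ n := by exact_mod_cast (by linarith : (2:ℝ) ≤ (n:ℝ))
  -- lam ≥ 0
  have hlam0 : 0 ≤ lam := by
    have : ∃ i : Fin n, i ≠ i₀ := by
      rcases Finset.exists_mem_ne (by rw [Finset.card_univ, Fintype.card_fin]; omega : 1 < (Finset.univ : Finset (Fin n)).card) i₀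
        with ⟨i, _, hi⟩
      exact ⟨i, hi⟩
    obtain ⟨i, hi⟩ := this
    exact le_trans (abs_nonneg _) (hbd i hi)
  have hlamd : lam < (d : ℝ) := lt_of_le_of_lt hlam (by nlinarith)
  set Y := GammaIn n G X S with hY
  -- lower bound on edge count
  have lower : d₁ * X.card ≤ ∑ u ∈ X, ∑ v ∈ Y, (G.adjMatrix ℝ) u v := by
    have per : ∀ u ∈ X, d₁ ≤ ∑ v ∈ Y, (G.adjMatrix ℝ) u v := by
      intro u hu
      have hsub : S ∩ G.neighborFinset u ⊆ Y.filter (fun v => G.Adj u v) := by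
        intro v hv
        rw [Finset.mem_inter] at hv
        obtain ⟨hvS, hvN⟩ := hv
        rw [SimpleGraph.mem_neighborFinset] at hvN
        rw [Finset.mem_filter]
        exact ⟨Finset.mem_filter.2 ⟨hvS, ⟨u, hu, hvN⟩⟩, hvN⟩
      have : ∑ v ∈ Y, (G.adjMatrix ℝ) u v = ((Y.filter (fun v => G.Adj u v)).card : ℝ) := by
        simp [SimpleGraph.adjMatrix_apply, Finset.sum_boole]
      rw [this]
      exact le_trans (hS u) (by exact_mod_cast Finset.card_le_card hsub)
    calc d₁ * X.card = ∑ _u ∈ X, d₁ := by rw [Finset.sum_const, nsmul_eq_mul]; ring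
      _ ≤ ∑ u ∈ X, ∑ v ∈ Y, (G.adjMatrix ℝ) u v := Finset.sum_le_sum per
  have upper := mixing_aux G hreg h i₀ h0 hbd hlamd hlam0 hn X Y
  -- combine
  by_contra hcon
  push_neg at hcon
  set k := (X.card : ℝ) with hk
  set m := (Y.card : ℝ) with hm
  have hm0 : 0 ≤ m := by positivity
  have hdd : (0:ℝ) < 2 * 0.001 * d := by nlinarith
  have hmlt : m < d₁ / (2 * 0.001 * d) * k := hcon
  have hd₁0 : 0 < d₁ := lt_of_lt_of_le hdd hd₁
  set s := Real.sqrt (k * m) with hs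
  have hs0 : 0 ≤ s := Real.sqrt_nonneg _
  have hs2 : s ^ 2 = k * m := Real.sq_sqrt (by positivity)
  have hnn : (0:ℝ) < n := by linarith
  -- d₁ k ≤ d k m / n + lam s
  have ineq : d₁ * k ≤ d * k * m / n + lam * s := le_trans lower upper
  -- bound first term : d k m / n < d₁ k / 2  (using m < t k, k ≤ 0.001 n)
  set t := d₁ / (2 * 0.001 * d) with ht
  have ht1 : 1 ≤ t := (one_le_div hdd).2 hd₁
  have htd : t * (2 * 0.001 * d) = d₁ := div_mul_cancel₀ _ hdd.ne'
  have term1 : d * k * m / n < d₁ * k / 2 := by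
    rw [div_lt_div_iff₀ hnn (by norm_num : (0:ℝ) < 2)]
    have h1 : d * k * m < d * k * (t * k) := by
      apply mul_lt_mul_of_pos_left hmlt
      nlinarith
    have h2 : d * k * (t * k) ≤ d * k * (t * (0.001 * n)) := by
      apply mul_le_mul_of_nonneg_left
      · apply mul_le_mul_of_nonneg_left hX
        linarith
      · nlinarith
    have h3 : (d:ℝ) * k * (t * (0.001 * n)) * 2 = d₁ * k * n := by rw [← htd]; ring
    linarith [h1, h2, h3]
  -- so lam s > d₁ k / 2
  have term2 : d₁ * k / 2 < lam * s := by linarith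
  -- but s² = k m < k t k ≤ (t k)², so s < t k, and lam ≤ 0.001 d gives contradiction
  have hs_lt : s < t * k := by
    have h1 : s ^ 2 < t * k ^ 2 := by rw [hs2]; nlinarith
    have h2 : t * k ^ 2 ≤ (t * k) ^ 2 := by nlinarith
    nlinarith
  have : lam * s ≤ 0.001 * d * s := mul_le_mul_of_nonneg_right hlam hs0
  -- d₁ k / 2 < 0.001 d s < 0.001 d t k = d₁ k / 2 : contradiction
  have hfin : 0.001 * d * s < 0.001 * d * (t * k) := by
    apply mul_lt_mul_of_pos_left hs_lt
    nlinarith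
  have heq : 0.001 * d * (t * k) = d₁ * k / 2 := by rw [← htd]; ring
  linarith
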